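/- Assume W ∈ C¹(ℝ), W(s) = ½s² + N(s) with N(s) = o(s²) as s → 0, and W satisfies (W-i) (so sublevel sets of E are bounded in X). Let 𝐮 ∈ X and let 𝐰_n be a sequence in X converging weakly to 0. Then E(𝐮 + 𝐰_n) − E(𝐮) − E(𝐰_n) → 0 and C(𝐮 + 𝐰_n) − C(𝐮) − C(𝐰_n) → 0 as n → ∞. -/

import Mathlib

open MeasureTheory Filter Topology Set
open scoped ENNReal

noncomputable section

section Helpers

lemma mulL2 {f g : ℝ → ℝ} (hf : MemLp f 2 (volume : Measure ℝ)) (hg : MemLp g 2 (volume : Measure ℝ)) :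
    Integrable (fun x => f x * g x) := by
  rw [← memLp_one_iff_integrable]
  have h := hg.smul (φ := f) hf (r := (1:ℝ≥0∞)) (hpqr := ⟨by simp [ENNReal.inv_two_add_inv_two, one_div]⟩)
  simpa [smul_eq_mul, Pi.mul_def] using h

lemma exists_small_point {f : ℝ → ℝ}
    {s : Set ℝ} (hs : volume s = ∞) (hsm : MeasurableSet s)
    (hfi : IntegrableOn f s) {ε : ℝ} (hε : 0 < ε) :
    ∃ y ∈ s, f y < ε := by
  by_contra h
  push_neg at h
  have hconst : Integrable (fun _ : ℝ => ε) (volume.restrict s) := by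
    refine hfi.mono' aestronglyMeasurable_const ?_
    refine (ae_restrict_iff' hsm).2 (Eventually.of_forall fun y hy => ?_)
    rw [Real.norm_of_nonneg hε.le]
    exact h y hy
  rcases integrable_const_iff.1 hconst with h0 | hlt
  · exact hε.ne' h0
  · have hlt := measure_lt_top (volume.restrict s) univ; rw [Measure.restrict_apply_univ, hs] at hlt
    exact (lt_irrefl _ hlt).elim

lemma abs_intervalIntegral_le {g : ℝ → ℝ} {s : Set ℝ}
    (hgi : IntegrableOn g s) {a b : ℝ}
    (hab : Set.uIoc a b ⊆ s) :
    |∫ t in a..b, g t| ≤ ∫ t in s, |g t| := by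
  calc |∫ t in a..b, g t| ≤ ∫ t in Set.uIoc a b, |g t| := by
        rcases le_total a b with hle | hle
        · rw [intervalIntegral.integral_of_le hle, Set.uIoc_of_le hle]
          exact (norm_integral_le_integral_norm g).trans_eq (by simp [Real.norm_eq_abs])
        · rw [intervalIntegral.integral_of_ge hle, Set.uIoc_of_ge hle, abs_neg]
          exact (norm_integral_le_integral_norm g).trans_eq (by simp [Real.norm_eq_abs])
    _ ≤ ∫ t in s, |g t| := by
        refine setIntegral_mono_set hgi.abs ?_ (HasSubset.Subset.eventuallyLE hab)
        exact Eventually.of_forall fun t => abs_nonneg _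

lemma sq_eq_add_integral {f f' : ℝ → ℝ} (hderiv : ∀ x, HasDerivAt f (f' x) x)
    (hf' : Continuous f') (x y : ℝ) :
    f x ^ 2 - f y ^ 2 = ∫ t in y..x, 2 * f t * f' t := by
  have hc : Continuous f := by
    rw [continuous_iff_continuousAt]; exact fun t => (hderiv t).continuousAt
  have h := intervalIntegral.integral_eq_sub_of_hasDerivAt
    (f := fun t => f t ^ 2) (f' := fun t => 2 * f t * f' t) (a := y) (b := x)
    (fun t _ => by simpa [pow_one] using (hderiv t).fun_pow 2)
    (((continuous_const.mul hc).mul hf').continuousOn.intervalIntegrable)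
  exact h.symm

lemma sq_le_tail {f f' : ℝ → ℝ} (hderiv : ∀ x, HasDerivAt f (f' x) x) (hf' : Continuous f')
    (hfi : Integrable (fun t => f t ^ 2)) (hffi : Integrable (fun t => f t * f' t))
    {s : Set ℝ} (hsm : MeasurableSet s) (hs : volume s = ∞)
    (hconv : ∀ a b, a ∈ s → b ∈ s → Set.uIoc b a ⊆ s) {x : ℝ} (hx : x ∈ s) :
    f x ^ 2 ≤ ∫ t in s, |2 * f t * f' t| := by
  have h2 : Integrable (fun t => 2 * f t * f' t) := by
    simpa [mul_assoc] using hffi.const_mul 2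
  refine le_of_forall_pos_le_add fun ε hε => ?_
  obtain ⟨y, hy, hy2⟩ := exists_small_point (f := fun t => f t ^ 2) hs hsm hfi.integrableOn hε
  have heq := sq_eq_add_integral hderiv hf' x y
  have habs := abs_intervalIntegral_le (g := fun t => 2 * f t * f' t) h2.integrableOn
    (hconv x y hx hy)
  have h3 : f x ^ 2 - f y ^ 2 ≤ |∫ t in y..x, 2 * f t * f' t| := heq.le.trans (le_abs_self _)
  linarith

lemma sup_sq_le {f f' : ℝ → ℝ} (hderiv : ∀ x, HasDerivAt f (f' x) x) (hf' : Continuous f')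
    (hfi : Integrable (fun t => f t ^ 2)) (hfi' : Integrable (fun t => f' t ^ 2))
    (hffi : Integrable (fun t => f t * f' t)) (x : ℝ) :
    f x ^ 2 ≤ (∫ t, f t ^ 2) + ∫ t, f' t ^ 2 := by
  have h1 : f x ^ 2 ≤ ∫ t in (univ : Set ℝ), |2 * f t * f' t| :=
    sq_le_tail hderiv hf' hfi hffi MeasurableSet.univ Real.volume_univ
      (fun _ _ _ _ => subset_univ _) (mem_univ x)
  rw [MeasureTheory.setIntegral_univ] at h1
  refine h1.trans ?_
  rw [← MeasureTheory.integral_add hfi hfi']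
  have hI : Integrable (fun t => |2 * f t * f' t|) := by
    simpa [mul_assoc] using (hffi.const_mul 2).abs
  refine integral_mono hI (hfi.add hfi') fun t => ?_
  have h3 : |2 * f t * f' t| = 2 * (|f t| * |f' t|) := by
    rw [abs_mul, abs_mul, abs_two]; ring
  nlinarith [sq_abs (f t), sq_abs (f' t), sq_nonneg (|f t| - |f' t|)]

lemma l2_weak_bounded {g : ℕ → ℝ → ℝ} (hg : ∀ n, MemLp (g n) 2 (volume : Measure ℝ))
    (hw : ∀ φ : ℝ → ℝ, MemLp φ 2 → Tendsto (fun n => ∫ x, g n x * φ x) atTop (nhds 0)) :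
    ∃ B : ℝ, 0 ≤ B ∧ ∀ n, ∫ x, g n x ^ 2 ≤ B := by
  set G : ℕ → Lp ℝ 2 (volume : Measure ℝ) := fun n => (hg n).toLp (g n) with hG
  have hinner : ∀ n (φ : Lp ℝ 2 (volume : Measure ℝ)),
      (inner ℝ (G n) φ : ℝ) = ∫ x, g n x * (φ : ℝ → ℝ) x := by
    intro n φ
    rw [L2.inner_def]
    refine integral_congr_ae ?_
    filter_upwards [(hg n).coeFn_toLp] with x hx
    simp [hG, hx, RCLike.inner_apply, mul_comm]
  have hpt : ∀ φ : Lp ℝ 2 (volume : Measure ℝ), ∃ C, ∀ n, ‖innerSL ℝ (G n) φ‖ ≤ C := by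
    intro φ
    have ht : Tendsto (fun n => innerSL ℝ (G n) φ) atTop (nhds 0) := by
      refine (hw (φ : ℝ → ℝ) (Lp.memLp φ)).congr fun n => ?_
      rw [innerSL_apply_apply, hinner n φ]
    obtain ⟨C, hC⟩ := ht.norm.bddAbove_range
    exact ⟨C, fun n => hC (Set.mem_range_self n)⟩
  obtain ⟨C', hC'⟩ := banach_steinhaus hpt
  refine ⟨C' ^ 2, sq_nonneg _, fun n => ?_⟩
  have h1 : ‖G n‖ ≤ C' := by
    have := hC' n
    rwa [innerSL_apply_norm] at this
  have h2 : (∫ x, g n x ^ 2) = ‖G n‖ ^ 2 := by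
    rw [← real_inner_self_eq_norm_sq, hinner n (G n)]
    refine integral_congr_ae ?_
    filter_upwards [(hg n).coeFn_toLp] with x hx
    rw [hx]; ring
  rw [h2]
  exact pow_le_pow_left₀ (norm_nonneg _) h1 2

lemma amgm_abs {a γ : ℝ} (hγ : 0 < γ) : |a| ≤ γ / 2 * a ^ 2 + 1 / (2 * γ) := by
  have key : 2 * γ * |a| ≤ γ ^ 2 * a ^ 2 + 1 := by
    nlinarith [sq_nonneg (γ * |a| - 1), sq_abs a]
  have h2γ : (0:ℝ) < 2 * γ := by linarith
  calc |a| = (2 * γ * |a|) / (2 * γ) := by field_simp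
    _ ≤ (γ ^ 2 * a ^ 2 + 1) / (2 * γ) := by
        gcongr
    _ = γ / 2 * a ^ 2 + 1 / (2 * γ) := by field_simp

lemma avg_bound {g g' : ℝ → ℝ} (hderiv : ∀ x, HasDerivAt g (g' x) x)
    (hc : Continuous g') (hsq : Integrable (fun t => g' t ^ 2))
    {x t γ : ℝ} (hxt : x ≤ t) (hγ : 0 < γ) :
    |g x - g t| ≤ γ / 2 * (∫ τ, g' τ ^ 2) + (t - x) / (2 * γ) := by
  have hftc := intervalIntegral.integral_eq_sub_of_hasDerivAt (f := g) (f' := g')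
    (a := x) (b := t) (fun τ _ => hderiv τ) hc.continuousOn.intervalIntegrable
  have h1 : |g x - g t| = |∫ τ in x..t, g' τ| := by rw [abs_sub_comm, ← hftc]
  rw [h1, intervalIntegral.integral_of_le hxt]
  have hIoc : IntegrableOn g' (Ioc x t) := (hc.integrableOn_Icc (a := x) (b := t)).mono_set Ioc_subset_Icc_self
  have hconstI : IntegrableOn (fun _ : ℝ => 1 / (2 * γ)) (Ioc x t) :=
    integrableOn_const (by simp [Real.volume_Ioc])
  calc |∫ τ in Ioc x t, g' τ| ≤ ∫ τ in Ioc x t, |g' τ| := by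
        exact (norm_integral_le_integral_norm g').trans_eq (by simp [Real.norm_eq_abs])
    _ ≤ ∫ τ in Ioc x t, (γ / 2 * g' τ ^ 2 + 1 / (2 * γ)) := by
        refine setIntegral_mono_on hIoc.abs ?_ measurableSet_Ioc fun τ _ => amgm_abs hγ
        exact (hsq.integrableOn.const_mul _).add hconstI
    _ = γ / 2 * (∫ τ in Ioc x t, g' τ ^ 2) + (1 / (2 * γ)) * (volume (Ioc x t)).toReal := by
        rw [integral_add (hsq.integrableOn.const_mul _) hconstI, integral_const_mul, setIntegral_const]
        simp [smul_eq_mul, mul_comm, measureReal_def]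
    _ ≤ γ / 2 * (∫ τ, g' τ ^ 2) + (t - x) / (2 * γ) := by
        have h2 : (volume (Ioc x t)).toReal = t - x := by
          rw [Real.volume_Ioc, ENNReal.toReal_ofReal (by linarith)]
        rw [h2, div_eq_inv_mul (t - x) (2 * γ), one_div]
        have h3 : (∫ τ in Ioc x t, g' τ ^ 2) ≤ ∫ τ, g' τ ^ 2 :=
          setIntegral_le_integral hsq (Eventually.of_forall fun τ => sq_nonneg _)
        have := mul_le_mul_of_nonneg_left h3 (by positivity : (0:ℝ) ≤ γ / 2)
        linarith

lemma pointwise_to_zero {g g' : ℕ → ℝ → ℝ}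
    (hderiv : ∀ n x, HasDerivAt (g n) (g' n x) x)
    (hc : ∀ n, Continuous (g' n))
    (hsq : ∀ n, Integrable (fun t => g' n t ^ 2))
    {B : ℝ} (hB0 : 0 ≤ B) (hB : ∀ n, ∫ t, g' n t ^ 2 ≤ B)
    (hw : ∀ φ : ℝ → ℝ, MemLp φ 2 → Tendsto (fun n => ∫ t, g n t * φ t) atTop (nhds 0))
    (x : ℝ) : Tendsto (fun n => g n x) atTop (nhds 0) := by
  rw [NormedAddCommGroup.tendsto_nhds_zero]
  intro ε hε
  set γ : ℝ := ε / (2 * (B + 1)) with hγdef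
  have hγ : 0 < γ := by positivity
  set h : ℝ := γ * ε / 2 with hhdef
  have hh : 0 < h := by positivity
  -- the averaging test function
  set φ : ℝ → ℝ := (Icc x (x + h)).indicator (fun _ => 1 / h) with hφdef
  have hφmem : MemLp φ 2 (volume : Measure ℝ) := by
    refine memLp_indicator_const 2 measurableSet_Icc _ (Or.inr ?_)
    simp [Real.volume_Icc]
  have hint : ∀ n, (∫ t, g n t * φ t) = (∫ t in Icc x (x + h), g n t) * (1 / h) := by
    intro n
    have : (fun t => g n t * φ t) = (Icc x (x + h)).indicator (fun t => g n t * (1 / h)) := by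
      funext t
      by_cases ht : t ∈ Icc x (x + h) <;> simp [hφdef, indicator_of_mem, indicator_of_notMem, ht]
    rw [this, integral_indicator measurableSet_Icc, integral_mul_const]
  -- key distance estimate
  have hs : γ / 2 * B + h / (2 * γ) ≤ ε / 2 := by
    have h1 : γ / 2 * B ≤ ε / 4 := by
      rw [hγdef]
      rw [div_mul_eq_mul_div, div_mul_eq_mul_div, div_div]
      rw [div_le_div_iff₀ (by positivity) (by norm_num)]
      nlinarith
    have h2 : h / (2 * γ) = ε / 4 := by
      rw [hhdef]; field_simp; ring
    linarith [h1, h2]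
  have hkey : ∀ n, |g n x - (∫ t in Icc x (x + h), g n t) * (1 / h)| ≤ γ / 2 * B + h / (2 * γ) := by
    intro n
    have hvol : (volume (Icc x (x + h))).toReal = h := by
      rw [Real.volume_Icc, show x + h - x = h by ring, ENNReal.toReal_ofReal hh.le]
    have hconst : g n x = (∫ t in Icc x (x + h), g n x) * (1 / h) := by
      rw [setIntegral_const, smul_eq_mul, measureReal_def, hvol]
      field_simp
    have hgint : IntegrableOn (g n) (Icc x (x + h)) := by
      have : Continuous (g n) := by
        rw [continuous_iff_continuousAt]; exact fun t => (hderiv n t).continuousAt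
      exact this.integrableOn_Icc
    have hgxint : IntegrableOn (fun _ : ℝ => g n x) (Icc x (x + h)) :=
      integrableOn_const (by simp [Real.volume_Icc])
    have hdiff : g n x - (∫ t in Icc x (x + h), g n t) * (1 / h)
        = (∫ t in Icc x (x + h), (g n x - g n t)) * (1 / h) := by
      rw [integral_sub hgxint hgint, sub_mul, ← hconst]
    rw [hdiff]
    have hbound : ∀ t ∈ Icc x (x + h), ‖g n x - g n t‖ ≤ γ / 2 * B + h / (2 * γ) := by
      intro t ht
      rw [Real.norm_eq_abs]
      have h1 := avg_bound (hderiv n) (hc n) (hsq n) ht.1 hγ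
      have h2 : γ / 2 * (∫ τ, g' n τ ^ 2) ≤ γ / 2 * B :=
        mul_le_mul_of_nonneg_left (hB n) (by positivity)
      have h3 : (t - x) / (2 * γ) ≤ h / (2 * γ) := by
        apply div_le_div_of_nonneg_right ?_ (by positivity)
        linarith [ht.2]
      linarith
    have hIcc : volume (Icc x (x + h)) < ⊤ := by simp [Real.volume_Icc]
    have hmeas : AEStronglyMeasurable (fun t => g n x - g n t)
        ((volume : Measure ℝ).restrict (Icc x (x + h))) :=
      (hgxint.sub hgint).aestronglyMeasurable
    have hbd := norm_setIntegral_le_of_norm_le_const hIcc hbound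
    rw [Real.norm_eq_abs, measureReal_def] at hbd
    calc |(∫ t in Icc x (x + h), (g n x - g n t)) * (1 / h)|
        = |∫ t in Icc x (x + h), (g n x - g n t)| * (1 / h) := by
          rw [abs_mul, abs_of_pos (by positivity : (0:ℝ) < 1 / h)]
      _ ≤ ((γ / 2 * B + h / (2 * γ)) * (volume (Icc x (x + h))).toReal) * (1 / h) := by
          gcongr
      _ = γ / 2 * B + h / (2 * γ) := by
          rw [hvol]; field_simp
  -- combine
  have hweak := hw φ hφmem
  rw [NormedAddCommGroup.tendsto_nhds_zero] at hweak
  filter_upwards [hweak (ε / 2) (by linarith)] with n hn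
  rw [hint n] at hn
  rw [Real.norm_eq_abs] at hn ⊢
  have hk := hkey n
  have htri : |g n x| ≤ |g n x - (∫ t in Icc x (x + h), g n t) * (1 / h)|
      + |(∫ t in Icc x (x + h), g n t) * (1 / h)| := by
    have := abs_add_le (g n x - (∫ t in Icc x (x + h), g n t) * (1 / h))
      ((∫ t in Icc x (x + h), g n t) * (1 / h))
    simpa using this
  linarith

lemma amgm2 {a b γ : ℝ} (hγ : 0 < γ) : |a| * b ^ 2 ≤ a ^ 2 / (2 * γ) + γ * b ^ 4 / 2 := by
  have key : (2 * γ) * (|a| * b ^ 2) ≤ a ^ 2 + γ ^ 2 * b ^ 4 := by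
    nlinarith [sq_nonneg (|a| - γ * b ^ 2), sq_abs a]
  have h2γ : (0:ℝ) < 2 * γ := by linarith
  calc |a| * b ^ 2 = ((2 * γ) * (|a| * b ^ 2)) / (2 * γ) := by field_simp
    _ ≤ (a ^ 2 + γ ^ 2 * b ^ 4) / (2 * γ) := by gcongr
    _ = a ^ 2 / (2 * γ) + γ * b ^ 4 / 2 := by field_simp

lemma tail_tendsto {g : ℝ → ℝ} (hgi : Integrable g) (hg0 : ∀ x, 0 ≤ g x) :
    Tendsto (fun k : ℕ => ∫ x in {x : ℝ | (k:ℝ) ≤ |x|}, g x) atTop (nhds 0) := by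
  have hmeas : ∀ k : ℕ, MeasurableSet {x : ℝ | (k:ℝ) ≤ |x|} := fun k =>
    (isClosed_le continuous_const continuous_abs).measurableSet
  have heq : ∀ k : ℕ, (∫ x in {x : ℝ | (k:ℝ) ≤ |x|}, g x)
      = ∫ x, ({x : ℝ | (k:ℝ) ≤ |x|}).indicator g x := fun k =>
    (integral_indicator (hmeas k)).symm
  simp_rw [heq]
  have h0 : (0:ℝ) = ∫ x : ℝ, (0:ℝ) := by simp
  rw [h0]
  refine tendsto_integral_of_dominated_convergence g
    (fun k => (hgi.aestronglyMeasurable.indicator (hmeas k))) hgi ?_ ?_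
  · intro k
    refine Eventually.of_forall fun x => ?_
    by_cases hx : x ∈ {x : ℝ | (k:ℝ) ≤ |x|}
    · rw [indicator_of_mem hx, Real.norm_eq_abs, abs_of_nonneg (hg0 x)]
    · rw [indicator_of_notMem hx]; simpa using hg0 x
  · refine Eventually.of_forall fun x => ?_
    refine tendsto_const_nhds.congr' ?_
    filter_upwards [eventually_gt_atTop ⌊|x|⌋₊] with k hk
    have : ¬ ((k:ℝ) ≤ |x|) := by
      push_neg
      calc |x| < ⌊|x|⌋₊ + 1 := Nat.lt_floor_add_one _
        _ ≤ (k:ℝ) := by exact_mod_cast Nat.succ_le_of_lt hk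
    have hnot : x ∉ {x : ℝ | (k:ℝ) ≤ |x|} := this
    exact (indicator_of_notMem hnot g).symm

set_option maxHeartbeats 2000000 in
lemma nonlinear_split
    (N : ℝ → ℝ) (hNc : Continuous N) (hN0 : N 0 = 0)
    (hsmall : ∀ c : ℝ, 0 < c → ∃ δ : ℝ, 0 < δ ∧ ∀ s : ℝ, |s| ≤ δ → |N s| ≤ c * s ^ 2)
    (u : ℝ → ℝ)
    (hu2 : Integrable (fun x => u x ^ 2))
    (Ku : ℝ) (hKu : ∀ x, |u x| ≤ Ku)
    (htail_pt : ∀ δ : ℝ, 0 < δ → ∃ R : ℝ, ∀ x : ℝ, R ≤ |x| → |u x| ≤ δ)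
    (w : ℕ → ℝ → ℝ) (hwc : ∀ n, Continuous (w n))
    (hw2 : ∀ n, Integrable (fun x => w n x ^ 2))
    (Bw : ℝ) (hBw : ∀ n, ∫ x, w n x ^ 2 ≤ Bw) (hBw0 : 0 ≤ Bw)
    (Kw : ℝ) (hKw : ∀ n x, |w n x| ≤ Kw)
    (hptw : ∀ x, Tendsto (fun n => w n x) atTop (nhds 0))
    (hDint : ∀ n, Integrable (fun x => N (u x + w n x) - N (u x) - N (w n x)))
    (L : ℝ) (hL0 : 0 ≤ L)
    (hMVT : ∀ p q : ℝ, |p| ≤ Ku + Kw → |q| ≤ Ku + Kw → |N p - N q| ≤ L * |p - q|)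
    (CN : ℝ) (hCN : ∀ s : ℝ, |s| ≤ Ku + Kw → |N s| ≤ CN) :
    Tendsto (fun n => ∫ x, (N (u x + w n x) - N (u x) - N (w n x))) atTop (nhds 0) := by
  have hKu0 : 0 ≤ Ku := (abs_nonneg _).trans (hKu 0)
  have hKw0 : 0 ≤ Kw := (abs_nonneg _).trans (hKw 0 0)
  have htail_sq := tail_tendsto hu2 (fun x => sq_nonneg _)
  rw [NormedAddCommGroup.tendsto_nhds_zero]
  intro ε hε
  set Iu := ∫ x, u x ^ 2 with hIudef
  have hIu0 : 0 ≤ Iu := integral_nonneg fun x => sq_nonneg _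
  set c₁ := ε / (16 * (Iu + Bw + 1)) with hc₁def
  have hc₁ : 0 < c₁ := by positivity
  obtain ⟨δ₀, hδ₀, hδ₀p⟩ := hsmall c₁ hc₁
  set δ := min δ₀ 1 / 2 with hδdef
  have hδpos : 0 < δ := by
    have : 0 < min δ₀ 1 := lt_min hδ₀ one_pos
    positivity
  have h2δ : ∀ s : ℝ, |s| ≤ 2 * δ → |N s| ≤ c₁ * s ^ 2 := by
    intro s hs
    refine hδ₀p s (hs.trans ?_)
    rw [hδdef]
    calc 2 * (min δ₀ 1 / 2) = min δ₀ 1 := by ring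
      _ ≤ δ₀ := min_le_left _ _
  set γ := δ ^ 2 * ε / (4 * (L + 1) * (Kw ^ 2 * Bw + 1)) with hγdef
  have hγ : 0 < γ := by positivity
  set ε₂ := γ * δ ^ 2 * ε / (4 * (L + 1)) with hε₂def
  have hε₂ : 0 < ε₂ := by positivity
  have hδne : δ ≠ 0 := ne_of_gt hδpos
  have hγne : γ ≠ 0 := ne_of_gt hγ
  have hL1 : (0:ℝ) < L + 1 := by linarith
  have hL1ne : L + 1 ≠ 0 := ne_of_gt hL1
  clear_value Iu c₁ δ γ ε₂
  -- arithmetic claims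
  have claim1 : 4 * c₁ * (Iu + Bw) ≤ ε / 4 := by
    have hne : Iu + Bw + 1 > 0 := by linarith
    calc 4 * c₁ * (Iu + Bw) = (ε / 4) * ((Iu + Bw) / (Iu + Bw + 1)) := by
          rw [hc₁def]; field_simp; ring
      _ ≤ (ε / 4) * 1 := by
          gcongr
          exact div_le_one_of_le₀ (by linarith) (by positivity)
      _ = ε / 4 := mul_one _
  have claim2 : L / δ ^ 2 * (ε₂ / (2 * γ)) ≤ ε / 8 := by
    calc L / δ ^ 2 * (ε₂ / (2 * γ)) = (ε / 8) * (L / (L + 1)) := by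
          rw [hε₂def]; field_simp; ring
      _ ≤ (ε / 8) * 1 := by
          gcongr
          exact div_le_one_of_le₀ (by linarith) (by positivity)
      _ = ε / 8 := mul_one _
  have claim3 : L / δ ^ 2 * (γ * (Kw ^ 2 * Bw) / 2) ≤ ε / 8 := by
    calc L / δ ^ 2 * (γ * (Kw ^ 2 * Bw) / 2)
        = (ε / 8) * ((L * (Kw ^ 2 * Bw)) / ((L + 1) * (Kw ^ 2 * Bw + 1))) := by
          rw [hγdef]; field_simp; ring
      _ ≤ (ε / 8) * 1 := by
          gcongr
          refine div_le_one_of_le₀ ?_ (by positivity)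
          nlinarith [sq_nonneg Kw]
      _ = ε / 8 := mul_one _
  -- choice of R = k
  obtain ⟨R₀, hR₀⟩ := htail_pt δ hδpos
  have hev : ∀ᶠ k : ℕ in atTop, (∫ x in {x : ℝ | (k:ℝ) ≤ |x|}, u x ^ 2) < ε₂ :=
    htail_sq.eventually (gt_mem_nhds hε₂)
  obtain ⟨k₀, hk₀⟩ := eventually_atTop.1 hev
  obtain ⟨k₁, hk₁⟩ := exists_nat_ge R₀
  set k := max k₀ k₁ with hkdef
  have hkR₀ : R₀ ≤ (k : ℝ) := hk₁.trans (by exact_mod_cast le_max_right k₀ k₁)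
  have hktail : (∫ x in {x : ℝ | (k:ℝ) ≤ |x|}, u x ^ 2) < ε₂ := hk₀ k (le_max_left _ _)
  set s : Set ℝ := Icc (-(k:ℝ)) k with hsdef
  have hsm : MeasurableSet s := measurableSet_Icc
  have hcompl : ∀ x : ℝ, x ∈ sᶜ → (k:ℝ) ≤ |x| := by
    intro x hx
    by_contra hcon
    push_neg at hcon
    exact hx (abs_le.1 hcon.le)
  -- tail pointwise bound
  set D : ℕ → ℝ → ℝ := fun n x => N (u x + w n x) - N (u x) - N (w n x) with hDdef
  set G : ℕ → ℝ → ℝ := fun n x =>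
    4 * c₁ * (u x ^ 2 + w n x ^ 2) + L / δ ^ 2 * (u x ^ 2 / (2 * γ) + γ * w n x ^ 4 / 2)
    with hGdef
  have htailbd : ∀ n, ∀ x : ℝ, (k:ℝ) ≤ |x| → |D n x| ≤ G n x := by
    intro n x hx
    have hux : |u x| ≤ δ := hR₀ x (hkR₀.trans hx)
    have hterm2 : 0 ≤ L / δ ^ 2 * (u x ^ 2 / (2 * γ) + γ * w n x ^ 4 / 2) := by positivity
    by_cases hwx : |w n x| ≤ δ
    · have h1 : |N (u x + w n x)| ≤ c₁ * (u x + w n x) ^ 2 := by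
        refine h2δ _ ?_
        calc |u x + w n x| ≤ |u x| + |w n x| := abs_add_le _ _
          _ ≤ 2 * δ := by linarith
      have h2 : |N (u x)| ≤ c₁ * u x ^ 2 := h2δ _ (by linarith)
      have h3 : |N (w n x)| ≤ c₁ * w n x ^ 2 := h2δ _ (by linarith)
      have htri : |D n x| ≤ |N (u x + w n x)| + |N (u x)| + |N (w n x)| := by
        have he : D n x = N (u x + w n x) + -(N (u x)) + -(N (w n x)) := by
          rw [hDdef]; ring
        rw [he]
        calc |N (u x + w n x) + -(N (u x)) + -(N (w n x))|
            ≤ |N (u x + w n x) + -(N (u x))| + |-(N (w n x))| := abs_add_le _ _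
          _ ≤ |N (u x + w n x)| + |-(N (u x))| + |-(N (w n x))| := by
              have := abs_add_le (N (u x + w n x)) (-(N (u x))); linarith
          _ = |N (u x + w n x)| + |N (u x)| + |N (w n x)| := by rw [abs_neg, abs_neg]
      have hsq : (u x + w n x) ^ 2 + u x ^ 2 + w n x ^ 2 ≤ 4 * (u x ^ 2 + w n x ^ 2) := by
        nlinarith [sq_nonneg (u x - w n x)]
      have : |D n x| ≤ 4 * c₁ * (u x ^ 2 + w n x ^ 2) := by nlinarith
      rw [hGdef]
      dsimp only
      linarith
    · push_neg at hwx
      have hδ2 : δ ^ 2 ≤ w n x ^ 2 := by nlinarith [abs_nonneg (w n x), sq_abs (w n x)]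
      have hb1 : |u x + w n x| ≤ Ku + Kw := by
        calc |u x + w n x| ≤ |u x| + |w n x| := abs_add_le _ _
          _ ≤ Ku + Kw := add_le_add (hKu x) (hKw n x)
      have hb2 : |w n x| ≤ Ku + Kw := (hKw n x).trans (by linarith)
      have h1 : |N (u x + w n x) - N (w n x)| ≤ L * |u x| := by
        have := hMVT (u x + w n x) (w n x) hb1 hb2
        simpa using this
      have h2 : |N (u x)| ≤ c₁ * u x ^ 2 := h2δ _ (by linarith)
      have htri : |D n x| ≤ |N (u x + w n x) - N (w n x)| + |N (u x)| := by
        have he : D n x = (N (u x + w n x) - N (w n x)) + -(N (u x)) := by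
          rw [hDdef]; ring
        rw [he]
        calc |(N (u x + w n x) - N (w n x)) + -(N (u x))|
            ≤ |N (u x + w n x) - N (w n x)| + |-(N (u x))| := abs_add_le _ _
          _ = |N (u x + w n x) - N (w n x)| + |N (u x)| := by rw [abs_neg]
      -- L |u| ≤ L |u| * (w² / δ²) ≤ (L/δ²) (u²/(2γ) + γ w⁴/2)
      have hstep : L * |u x| ≤ L / δ ^ 2 * (u x ^ 2 / (2 * γ) + γ * w n x ^ 4 / 2) := by
        have h4 : L * |u x| ≤ L * |u x| * (w n x ^ 2 / δ ^ 2) := by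
          refine le_mul_of_one_le_right (by positivity) ?_
          rw [le_div_iff₀ (by positivity)]
          linarith
        have h5 : |u x| * w n x ^ 2 ≤ u x ^ 2 / (2 * γ) + γ * w n x ^ 4 / 2 := amgm2 hγ
        have h6 : L * |u x| * (w n x ^ 2 / δ ^ 2) = L / δ ^ 2 * (|u x| * w n x ^ 2) := by
          field_simp
        rw [h6] at h4
        refine h4.trans ?_
        gcongr
      have hc₁4 : c₁ * u x ^ 2 ≤ 4 * c₁ * (u x ^ 2 + w n x ^ 2) := by nlinarith [sq_nonneg (w n x), sq_nonneg (u x)]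
      rw [hGdef]
      dsimp only
      linarith
  -- integrability of pieces
  have hw4 : ∀ n, Integrable (fun x => w n x ^ 4) := by
    intro n
    refine Integrable.mono' ((hw2 n).const_mul (Kw ^ 2))
      (((hwc n).pow 4).aestronglyMeasurable) (Eventually.of_forall fun x => ?_)
    have h := hKw n x
    have h2 : w n x ^ 2 ≤ Kw ^ 2 := by nlinarith [sq_abs (w n x), abs_nonneg (w n x)]
    rw [Real.norm_eq_abs, abs_of_nonneg (by positivity : (0:ℝ) ≤ w n x ^ 4)]
    nlinarith [sq_nonneg (w n x), sq_nonneg (w n x ^ 2)]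
  have hw4bd : ∀ n, ∫ x, w n x ^ 4 ≤ Kw ^ 2 * Bw := by
    intro n
    have h1 : ∫ x, w n x ^ 4 ≤ ∫ x, Kw ^ 2 * w n x ^ 2 := by
      refine integral_mono (hw4 n) ((hw2 n).const_mul _) fun x => ?_
      have h := hKw n x
      have h2 : w n x ^ 2 ≤ Kw ^ 2 := by nlinarith [sq_abs (w n x), abs_nonneg (w n x)]
      nlinarith [sq_nonneg (w n x), sq_nonneg (w n x ^ 2)]
    rw [integral_const_mul] at h1
    calc ∫ x, w n x ^ 4 ≤ Kw ^ 2 * ∫ x, w n x ^ 2 := h1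
      _ ≤ Kw ^ 2 * Bw := by
          refine mul_le_mul_of_nonneg_left (hBw n) (by positivity)
  have hGint : ∀ n, Integrable (G n) := by
    intro n
    rw [hGdef]
    refine Integrable.add (Integrable.const_mul (hu2.add (hw2 n)) _) ?_
    refine Integrable.const_mul ?_ _
    exact (hu2.div_const _).add (((hw4 n).const_mul γ).div_const 2)
  -- the tail integral bound
  have htailint : ∀ n, (∫ x in sᶜ, |D n x|) ≤ ε / 2 := by
    intro n
    have hDabs : IntegrableOn (fun x => |D n x|) sᶜ := (hDint n).abs.integrableOn
    have hmono : (∫ x in sᶜ, |D n x|) ≤ ∫ x in sᶜ, G n x := by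
      refine setIntegral_mono_on hDabs (hGint n).integrableOn hsm.compl fun x hx => ?_
      exact htailbd n x (hcompl x hx)
    refine hmono.trans ?_
    -- compute/estimate ∫_sᶜ G n
    have hsplitG : (∫ x in sᶜ, G n x)
        = 4 * c₁ * ((∫ x in sᶜ, u x ^ 2) + ∫ x in sᶜ, w n x ^ 2)
          + L / δ ^ 2 * ((∫ x in sᶜ, u x ^ 2) / (2 * γ) + γ * (∫ x in sᶜ, w n x ^ 4) / 2) := by
      have e1 : Integrable (fun x => 4 * c₁ * (u x ^ 2 + w n x ^ 2))
          ((volume : Measure ℝ).restrict sᶜ) :=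
        (hu2.integrableOn.add (hw2 n).integrableOn).const_mul _
      have e2 : Integrable (fun x => L / δ ^ 2 * (u x ^ 2 / (2 * γ) + γ * w n x ^ 4 / 2))
          ((volume : Measure ℝ).restrict sᶜ) :=
        ((hu2.integrableOn.div_const _).add
          (((hw4 n).integrableOn.const_mul γ).div_const 2)).const_mul _
      rw [hGdef]
      dsimp only
      rw [integral_add e1 e2, integral_const_mul, integral_const_mul,
        integral_add hu2.integrableOn (hw2 n).integrableOn,
        integral_add (hu2.integrableOn.div_const _)
          (((hw4 n).integrableOn.const_mul γ).div_const 2),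
        integral_div, integral_div, integral_const_mul]
    rw [hsplitG]
    have hsub : sᶜ ⊆ {x : ℝ | (k:ℝ) ≤ |x|} := fun x hx => hcompl x hx
    have hAu1 : (∫ x in sᶜ, u x ^ 2) ≤ ∫ x in {x : ℝ | (k:ℝ) ≤ |x|}, u x ^ 2 := by
      refine setIntegral_mono_set hu2.integrableOn
        (Eventually.of_forall fun x => sq_nonneg _) (HasSubset.Subset.eventuallyLE hsub)
    have hAu2 : (∫ x in sᶜ, u x ^ 2) ≤ ε₂ := hAu1.trans hktail.le
    have hAu3 : (∫ x in sᶜ, u x ^ 2) ≤ Iu := by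
      rw [hIudef]
      exact setIntegral_le_integral hu2 (Eventually.of_forall fun x => sq_nonneg _)
    have hAu0 : 0 ≤ ∫ x in sᶜ, u x ^ 2 := integral_nonneg fun x => sq_nonneg _
    have hBn : (∫ x in sᶜ, w n x ^ 2) ≤ Bw :=
      (setIntegral_le_integral (hw2 n) (Eventually.of_forall fun x => sq_nonneg _)).trans (hBw n)
    have hBn0 : 0 ≤ ∫ x in sᶜ, w n x ^ 2 := integral_nonneg fun x => sq_nonneg _
    have hCn : (∫ x in sᶜ, w n x ^ 4) ≤ Kw ^ 2 * Bw :=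
      (setIntegral_le_integral (hw4 n) (Eventually.of_forall fun x =>
        by positivity)).trans (hw4bd n)
    have hCn0 : 0 ≤ ∫ x in sᶜ, w n x ^ 4 := integral_nonneg fun x => by positivity
    have hb1 : 4 * c₁ * ((∫ x in sᶜ, u x ^ 2) + ∫ x in sᶜ, w n x ^ 2) ≤ ε / 4 := by
      refine le_trans ?_ claim1
      gcongr <;> linarith
    have hb2 : L / δ ^ 2 * ((∫ x in sᶜ, u x ^ 2) / (2 * γ) + γ * (∫ x in sᶜ, w n x ^ 4) / 2)
        ≤ ε / 8 + ε / 8 := by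
      have e1 : L / δ ^ 2 * ((∫ x in sᶜ, u x ^ 2) / (2 * γ)) ≤ L / δ ^ 2 * (ε₂ / (2 * γ)) := by
        gcongr
      have e2 : L / δ ^ 2 * (γ * (∫ x in sᶜ, w n x ^ 4) / 2)
          ≤ L / δ ^ 2 * (γ * (Kw ^ 2 * Bw) / 2) := by gcongr
      have := claim2; have := claim3
      nlinarith [e1, e2]
    linarith
  -- compact part by dominated convergence
  have hDCT : Tendsto (fun n => ∫ x in s, D n x) atTop (nhds 0) := by
    have h0 : (0:ℝ) = ∫ x in s, (0:ℝ) := by simp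
    rw [h0]
    refine tendsto_integral_of_dominated_convergence (fun _ => 3 * CN)
      (fun n => (hDint n).aestronglyMeasurable.restrict) ?_ ?_ ?_
    · refine integrableOn_const ?_
      rw [hsdef, Real.volume_Icc]
      exact ENNReal.ofReal_ne_top
    · intro n
      refine Eventually.of_forall fun x => ?_
      rw [Real.norm_eq_abs]
      have hb1 : |u x + w n x| ≤ Ku + Kw :=
        (abs_add_le _ _).trans (add_le_add (hKu x) (hKw n x))
      have hb2 : |u x| ≤ Ku + Kw := (hKu x).trans (by linarith)
      have hb3 : |w n x| ≤ Ku + Kw := (hKw n x).trans (by linarith)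
      have c1 := hCN _ hb1
      have c2 := hCN _ hb2
      have c3 := hCN _ hb3
      have := abs_sub (N (u x + w n x) - N (u x)) (N (w n x))
      have := abs_sub (N (u x + w n x)) (N (u x))
      calc |D n x| ≤ |N (u x + w n x)| + |N (u x)| + |N (w n x)| := by
            rw [hDdef]
            dsimp only
            calc |N (u x + w n x) - N (u x) - N (w n x)|
                ≤ |N (u x + w n x) - N (u x)| + |N (w n x)| := abs_sub _ _
              _ ≤ |N (u x + w n x)| + |N (u x)| + |N (w n x)| := by
                  have := abs_sub (N (u x + w n x)) (N (u x)); linarith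
        _ ≤ 3 * CN := by linarith
    · refine Eventually.of_forall fun x => ?_
      have h1 : Tendsto (fun n => u x + w n x) atTop (nhds (u x)) := by
        simpa using tendsto_const_nhds.add (hptw x)
      have h2 : Tendsto (fun n => N (u x + w n x)) atTop (nhds (N (u x))) :=
        (hNc.tendsto (u x)).comp h1
      have h3 : Tendsto (fun n => N (w n x)) atTop (nhds (N 0)) :=
        (hNc.tendsto 0).comp (hptw x)
      have h4 : Tendsto (fun n => N (u x + w n x) - N (u x) - N (w n x)) atTop
          (nhds (N (u x) - N (u x) - N 0)) := (h2.sub tendsto_const_nhds).sub h3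
      rw [hN0] at h4
      simpa using h4
  -- combine
  have hev2 : ∀ᶠ n in atTop, ‖∫ x in s, D n x‖ < ε / 2 := by
    have := (NormedAddCommGroup.tendsto_nhds_zero.1 hDCT) (ε / 2) (by linarith)
    exact this
  filter_upwards [hev2] with n hn
  have hsplit : (∫ x in s, D n x) + (∫ x in sᶜ, D n x) = ∫ x, D n x :=
    integral_add_compl hsm (hDint n)
  have habs : |∫ x in sᶜ, D n x| ≤ ∫ x in sᶜ, |D n x| := by
    have h := norm_integral_le_integral_norm (μ := (volume : Measure ℝ).restrict sᶜ) (D n)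
    simp only [Real.norm_eq_abs] at h
    exact h
  rw [Real.norm_eq_abs] at hn ⊢
  calc |∫ x, D n x| = |(∫ x in s, D n x) + (∫ x in sᶜ, D n x)| := by rw [hsplit]
    _ ≤ |∫ x in s, D n x| + |∫ x in sᶜ, D n x| := abs_add_le _ _
    _ < ε / 2 + ε / 2 := by
        have := htailint n
        have := habs
        linarith
    _ = ε := by ring


end Helpers


/-- `u ∈ H²(ℝ)`: `u` has everywhere first derivative `u'` and second derivative `u''`,
with `u, u', u'' ∈ L²(ℝ)`. -/
def InH2 (u u' u'' : ℝ → ℝ) : Prop :=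
  (∀ x, HasDerivAt u (u' x) x) ∧ (∀ x, HasDerivAt u' (u'' x) x) ∧
    MemLp u 2 ∧ MemLp u' 2 ∧ MemLp u'' 2

/-- `(u,v) ∈ X = H²(ℝ) × L²(ℝ)`. -/
def InX (u u' u'' v : ℝ → ℝ) : Prop :=
  InH2 u u' u'' ∧ MemLp v 2

/-- The squared `X`-norm `‖𝐮‖² = ∫ (v² + u_xx² + u²)`. -/
def normSq (u u'' v : ℝ → ℝ) : ℝ :=
  ∫ x : ℝ, ((v x) ^ 2 + (u'' x) ^ 2 + (u x) ^ 2)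

/-- The energy `E(𝐮) = ½∫(v² + u_xx²) + ∫ W(u)`. -/
def energy (W u u'' v : ℝ → ℝ) : ℝ :=
  (1 / 2) * (∫ x : ℝ, ((v x) ^ 2 + (u'' x) ^ 2)) + ∫ x : ℝ, W (u x)

/-- The momentum (hylenic charge) `C(𝐮) = −∫ v u_x`. -/
def momentum (u' v : ℝ → ℝ) : ℝ :=
  -∫ x : ℝ, v x * u' x

set_option maxHeartbeats 1000000 in
/-- Lemma 8 (splitting): assume `W ∈ C¹`, `W(s) = ½s² + N(s)` with `N(s) = o(s²)` at `0`,
and (W-i).  Let `𝐮 = (u,v) ∈ X` and let `𝐰ₙ = (wₙ,zₙ)` be a sequence in `X` converging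
weakly to `0` (i.e. `wₙ ⇀ 0` in `H²(ℝ)` and `zₙ ⇀ 0` in `L²(ℝ)`).  Then
`E(𝐮+𝐰ₙ) − E(𝐮) − E(𝐰ₙ) → 0` and `C(𝐮+𝐰ₙ) − C(𝐮) − C(𝐰ₙ) → 0`. -/
theorem energy_momentum_splitting (W : ℝ → ℝ) (hW : ContDiff ℝ 1 W)
    (hWii : (fun s => W s - s ^ 2 / 2) =o[nhds (0 : ℝ)] fun s => s ^ 2)
    (hWi : ∃ η : ℝ, 0 < η ∧ (∀ s : ℝ, |s| ≤ 1 → η * s ^ 2 ≤ W s) ∧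
      (∀ s : ℝ, 1 ≤ |s| → η ≤ W s))
    (u u' u'' v : ℝ → ℝ) (hX : InX u u' u'' v)
    (hintu : Integrable (fun x => W (u x)))
    (w w' w'' z : ℕ → ℝ → ℝ)
    (hXw : ∀ n, InX (w n) (w' n) (w'' n) (z n))
    (hintw : ∀ n, Integrable (fun x => W (w n x)))
    (hintuw : ∀ n, Integrable (fun x => W (u x + w n x)))
    -- weak convergence to 0 of `wₙ` in `H²(ℝ)`:
    (hweak0 : ∀ φ : ℝ → ℝ, MemLp φ 2 →
      Filter.Tendsto (fun n => ∫ x : ℝ, w n x * φ x) Filter.atTop (nhds 0))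
    (hweak1 : ∀ φ : ℝ → ℝ, MemLp φ 2 →
      Filter.Tendsto (fun n => ∫ x : ℝ, w' n x * φ x) Filter.atTop (nhds 0))
    (hweak2 : ∀ φ : ℝ → ℝ, MemLp φ 2 →
      Filter.Tendsto (fun n => ∫ x : ℝ, w'' n x * φ x) Filter.atTop (nhds 0))
    -- weak convergence to 0 of `zₙ` in `L²(ℝ)`:
    (hweakz : ∀ φ : ℝ → ℝ, MemLp φ 2 →
      Filter.Tendsto (fun n => ∫ x : ℝ, z n x * φ x) Filter.atTop (nhds 0)) :
    Filter.Tendsto (fun n =>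
        energy W (fun x => u x + w n x) (fun x => u'' x + w'' n x) (fun x => v x + z n x)
          - energy W u u'' v - energy W (w n) (w'' n) (z n)) Filter.atTop (nhds 0) ∧
    Filter.Tendsto (fun n =>
        momentum (fun x => u' x + w' n x) (fun x => v x + z n x)
          - momentum u' v - momentum (w' n) (z n)) Filter.atTop (nhds 0) := by
  obtain ⟨⟨hu1, hu2d, huL2, hu'L2, hu''L2⟩, hvL2⟩ := hX
  have hw1 : ∀ n x, HasDerivAt (w n) (w' n x) x := fun n => (hXw n).1.1
  have hw2d : ∀ n x, HasDerivAt (w' n) (w'' n x) x := fun n => (hXw n).1.2.1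
  have hwL2 : ∀ n, MemLp (w n) 2 (volume : Measure ℝ) := fun n => (hXw n).1.2.2.1
  have hw'L2 : ∀ n, MemLp (w' n) 2 (volume : Measure ℝ) := fun n => (hXw n).1.2.2.2.1
  have hw''L2 : ∀ n, MemLp (w'' n) 2 (volume : Measure ℝ) := fun n => (hXw n).1.2.2.2.2
  have hzL2 : ∀ n, MemLp (z n) 2 (volume : Measure ℝ) := fun n => (hXw n).2
  -- continuity
  have hucont : Continuous u := by
    rw [continuous_iff_continuousAt]; exact fun x => (hu1 x).continuousAt
  have hu'cont : Continuous u' := by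
    rw [continuous_iff_continuousAt]; exact fun x => (hu2d x).continuousAt
  have hwcont : ∀ n, Continuous (w n) := fun n => by
    rw [continuous_iff_continuousAt]; exact fun x => (hw1 n x).continuousAt
  have hw'cont : ∀ n, Continuous (w' n) := fun n => by
    rw [continuous_iff_continuousAt]; exact fun x => (hw2d n x).continuousAt
  -- squares
  have hIu2 : Integrable (fun x => u x ^ 2) := huL2.integrable_sq
  have hIu'2 : Integrable (fun x => u' x ^ 2) := hu'L2.integrable_sq
  have hIw2 : ∀ n, Integrable (fun x => w n x ^ 2) := fun n => (hwL2 n).integrable_sq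
  have hIw'2 : ∀ n, Integrable (fun x => w' n x ^ 2) := fun n => (hw'L2 n).integrable_sq
  -- the nonlinearity N
  set N : ℝ → ℝ := fun s => W s - s ^ 2 / 2 with hNdef
  have hWd : ∀ x : ℝ, HasDerivAt W (deriv W x) x := fun x =>
    ((hW.differentiable one_ne_zero) x).hasDerivAt
  have hNd : ∀ x : ℝ, HasDerivAt N (deriv W x - x) x := by
    intro x
    have h2 : HasDerivAt (fun s : ℝ => s ^ 2 / 2) x x := by
      simpa using (hasDerivAt_pow 2 x).div_const 2
    exact (hWd x).sub h2
  have hNc : Continuous N := (hW.continuous).sub (by continuity)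
  have hN'c : Continuous (fun x : ℝ => deriv W x - x) :=
    (hW.continuous_deriv le_rfl).sub continuous_id
  have hN0 : N 0 = 0 := by
    have h := (Asymptotics.isLittleO_iff.mp hWii) (c := 1) one_pos
    have h2 := h.self_of_nhds
    simp only [Real.norm_eq_abs] at h2
    have : |N 0| ≤ 0 := by simpa [hNdef] using h2
    have := abs_nonneg (N 0)
    have : |N 0| = 0 := le_antisymm ‹|N 0| ≤ 0› ‹0 ≤ |N 0|›
    exact abs_eq_zero.1 this
  have hsmall : ∀ c : ℝ, 0 < c → ∃ δ : ℝ, 0 < δ ∧ ∀ s : ℝ, |s| ≤ δ → |N s| ≤ c * s ^ 2 := by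
    intro c hc
    have h := (Asymptotics.isLittleO_iff.mp hWii) hc
    rw [Metric.eventually_nhds_iff] at h
    obtain ⟨δ', hδ', hh⟩ := h
    refine ⟨δ' / 2, by positivity, fun s hs => ?_⟩
    have hdist : dist s 0 < δ' := by
      rw [Real.dist_eq, sub_zero]
      calc |s| ≤ δ' / 2 := hs
        _ < δ' := by linarith
    have := hh hdist
    simp only [Real.norm_eq_abs] at this
    calc |N s| ≤ c * |s ^ 2| := this
      _ = c * s ^ 2 := by rw [abs_of_nonneg (sq_nonneg s)]
  -- bounds on u
  have huu' : Integrable (fun x => u x * u' x) := mulL2 huL2 hu'L2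
  set Ku : ℝ := Real.sqrt ((∫ x, u x ^ 2) + ∫ x, u' x ^ 2) with hKudef
  have hKu : ∀ x, |u x| ≤ Ku := by
    intro x
    have h := sup_sq_le hu1 hu'cont hIu2 hIu'2 huu' x
    rw [hKudef, ← Real.sqrt_sq_eq_abs]
    exact Real.sqrt_le_sqrt h
  -- tail pointwise bound on u
  have htail_pt : ∀ δ : ℝ, 0 < δ → ∃ R : ℝ, ∀ x : ℝ, R ≤ |x| → |u x| ≤ δ := by
    intro δ hδ
    have hgi : Integrable (fun t => |2 * u t * u' t|) := by
      simpa [mul_assoc] using (huu'.const_mul 2).abs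
    have hgt := tail_tendsto hgi (fun t => abs_nonneg _)
    have hev : ∀ᶠ k : ℕ in atTop, (∫ t in {t : ℝ | (k:ℝ) ≤ |t|}, |2 * u t * u' t|) < δ ^ 2 :=
      hgt.eventually (gt_mem_nhds (by positivity))
    obtain ⟨k, hk⟩ := hev.exists
    refine ⟨(k : ℝ), fun x hx => ?_⟩
    have hknn : (0:ℝ) ≤ (k:ℝ) := Nat.cast_nonneg k
    have hsub1 : Ici (k:ℝ) ⊆ {t : ℝ | (k:ℝ) ≤ |t|} := by
      intro t ht
      simp only [mem_setOf_eq]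
      calc (k:ℝ) ≤ t := ht
        _ ≤ |t| := le_abs_self t
    have hsub2 : Iic (-(k:ℝ)) ⊆ {t : ℝ | (k:ℝ) ≤ |t|} := by
      intro t ht
      simp only [mem_setOf_eq, mem_Iic] at ht ⊢
      rw [abs_of_nonpos (by linarith)]
      linarith
    have hTmeas : MeasurableSet {t : ℝ | (k:ℝ) ≤ |t|} :=
      (isClosed_le continuous_const continuous_abs).measurableSet
    have hsq : u x ^ 2 < δ ^ 2 := by
      rcases le_or_gt (k:ℝ) x with hcase | hcase
      · have h1 := sq_le_tail hu1 hu'cont hIu2 huu' measurableSet_Ici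
          Real.volume_Ici (fun a b ha hb => ?_) (mem_Ici.2 hcase)
        · refine lt_of_le_of_lt (h1.trans ?_) hk
          refine setIntegral_mono_set (hgi.integrableOn) ?_ (HasSubset.Subset.eventuallyLE hsub1)
          exact Eventually.of_forall fun t => abs_nonneg _
        · intro t ht
          rcases Set.mem_uIoc.1 ht with h | h
          · exact le_of_lt (lt_of_le_of_lt (mem_Ici.1 hb) h.1)
          · exact le_of_lt (lt_of_le_of_lt (mem_Ici.1 ha) h.1)
      · have hx' : x ≤ -(k:ℝ) := by
          rcases abs_cases x with ⟨h1, _⟩ | ⟨h1, _⟩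
          · exfalso; rw [h1] at hx; linarith
          · linarith [hx, h1]
        have h1 := sq_le_tail hu1 hu'cont hIu2 huu' measurableSet_Iic
          Real.volume_Iic (fun a b ha hb => ?_) (mem_Iic.2 hx')
        · refine lt_of_le_of_lt (h1.trans ?_) hk
          refine setIntegral_mono_set (hgi.integrableOn) ?_ (HasSubset.Subset.eventuallyLE hsub2)
          exact Eventually.of_forall fun t => abs_nonneg _
        · intro t ht
          rcases Set.mem_uIoc.1 ht with h | h
          · exact mem_Iic.2 (h.2.trans (mem_Iic.1 ha))
          · exact mem_Iic.2 (h.2.trans (mem_Iic.1 hb))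
    nlinarith [abs_nonneg (u x), sq_abs (u x), hδ]
  -- bounds on w
  obtain ⟨Bw, hBw0, hBw⟩ := l2_weak_bounded hwL2 hweak0
  obtain ⟨Bw', hBw'0, hBw'⟩ := l2_weak_bounded hw'L2 hweak1
  set Kw : ℝ := Real.sqrt (Bw + Bw') with hKwdef
  have hKw : ∀ n x, |w n x| ≤ Kw := by
    intro n x
    have h := sup_sq_le (hw1 n) (hw'cont n) (hIw2 n) (hIw'2 n)
      (mulL2 (hwL2 n) (hw'L2 n)) x
    rw [hKwdef, ← Real.sqrt_sq_eq_abs]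
    refine Real.sqrt_le_sqrt (h.trans ?_)
    exact add_le_add (hBw n) (hBw' n)
  -- pointwise convergence of w
  have hptw : ∀ x, Tendsto (fun n => w n x) atTop (nhds 0) :=
    pointwise_to_zero hw1 hw'cont hIw'2 hBw'0 hBw' hweak0
  -- integrability of D
  have hDint : ∀ n, Integrable (fun x => N (u x + w n x) - N (u x) - N (w n x)) := by
    intro n
    have base : Integrable (fun x => W (u x + w n x) - W (u x) - W (w n x) - u x * w n x) :=
      (((hintuw n).sub hintu).sub (hintw n)).sub (mulL2 huL2 (hwL2 n))
    refine base.congr (Eventually.of_forall fun x => ?_)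
    rw [hNdef]; ring
  -- MVT and compact bounds for N
  have hKu0 : 0 ≤ Ku := Real.sqrt_nonneg _
  have hKw0 : 0 ≤ Kw := Real.sqrt_nonneg _
  obtain ⟨L₀, hL₀⟩ := (isCompact_Icc (a := -(Ku + Kw)) (b := Ku + Kw)).exists_bound_of_continuousOn
    hN'c.continuousOn
  set L := max L₀ 0 with hLdef
  have hL0 : 0 ≤ L := le_max_right _ _
  have hMVT : ∀ p q : ℝ, |p| ≤ Ku + Kw → |q| ≤ Ku + Kw → |N p - N q| ≤ L * |p - q| := by
    intro p q hp hq
    have h := Convex.norm_image_sub_le_of_norm_hasDerivWithin_le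
      (f := N) (f' := fun x => deriv W x - x) (s := Icc (-(Ku + Kw)) (Ku + Kw)) (C := L)
      (fun x _ => (hNd x).hasDerivWithinAt)
      (fun x hx => ((hL₀ x hx).trans (le_max_left L₀ 0)))
      (convex_Icc _ _) (abs_le.1 hq) (abs_le.1 hp)
    simpa [Real.norm_eq_abs] using h
  obtain ⟨CN₀, hCN₀⟩ := (isCompact_Icc (a := -(Ku + Kw)) (b := Ku + Kw)).exists_bound_of_continuousOn
    hNc.continuousOn
  have hCN : ∀ s : ℝ, |s| ≤ Ku + Kw → |N s| ≤ CN₀ := by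
    intro s hs
    have := hCN₀ s (abs_le.1 hs)
    simpa [Real.norm_eq_abs] using this
  -- the nonlinear term tends to zero
  have hDtend := nonlinear_split N hNc hN0 hsmall u hIu2 Ku hKu htail_pt
    w hwcont hIw2 Bw hBw hBw0 Kw hKw hptw hDint L hL0 hMVT CN₀ hCN
  -- weak convergence limits needed
  have tuw : Tendsto (fun n => ∫ x, u x * w n x) atTop (nhds 0) := by
    refine (hweak0 u huL2).congr fun n => ?_
    exact integral_congr_ae (Eventually.of_forall fun x => mul_comm _ _)
  have tvz : Tendsto (fun n => ∫ x, v x * z n x) atTop (nhds 0) := by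
    refine (hweakz v hvL2).congr fun n => ?_
    exact integral_congr_ae (Eventually.of_forall fun x => mul_comm _ _)
  have tu''w'' : Tendsto (fun n => ∫ x, u'' x * w'' n x) atTop (nhds 0) := by
    refine (hweak2 u'' hu''L2).congr fun n => ?_
    exact integral_congr_ae (Eventually.of_forall fun x => mul_comm _ _)
  have tvw' : Tendsto (fun n => ∫ x, v x * w' n x) atTop (nhds 0) := by
    refine (hweak1 v hvL2).congr fun n => ?_
    exact integral_congr_ae (Eventually.of_forall fun x => mul_comm _ _)
  have tzu' : Tendsto (fun n => ∫ x, z n x * u' x) atTop (nhds 0) := hweakz u' hu'L2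
  constructor
  · -- energy
    have hiden : ∀ n,
        energy W (fun x => u x + w n x) (fun x => u'' x + w'' n x) (fun x => v x + z n x)
          - energy W u u'' v - energy W (w n) (w'' n) (z n)
        = (∫ x, v x * z n x) + (∫ x, u'' x * w'' n x) + (∫ x, u x * w n x)
          + ∫ x, (N (u x + w n x) - N (u x) - N (w n x)) := by
      intro n
      unfold energy
      have q1 : Integrable (fun x => v x ^ 2 + u'' x ^ 2) :=
        hvL2.integrable_sq.add hu''L2.integrable_sq
      have q2 : Integrable (fun x => z n x ^ 2 + w'' n x ^ 2) :=
        (hzL2 n).integrable_sq.add (hw''L2 n).integrable_sq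
      have q3 : Integrable (fun x => 2 * (v x * z n x)) := (mulL2 hvL2 (hzL2 n)).const_mul 2
      have q4 : Integrable (fun x => 2 * (u'' x * w'' n x)) :=
        (mulL2 hu''L2 (hw''L2 n)).const_mul 2
      have he1 : (fun x => (v x + z n x) ^ 2 + (u'' x + w'' n x) ^ 2)
          = fun x => (v x ^ 2 + u'' x ^ 2) + ((z n x ^ 2 + w'' n x ^ 2)
              + (2 * (v x * z n x) + 2 * (u'' x * w'' n x))) := by
        funext x; ring
      have hq : (∫ x, ((v x + z n x) ^ 2 + (u'' x + w'' n x) ^ 2))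
          = (∫ x, (v x ^ 2 + u'' x ^ 2)) + ((∫ x, (z n x ^ 2 + w'' n x ^ 2))
              + (2 * (∫ x, v x * z n x) + 2 * (∫ x, u'' x * w'' n x))) := by
        have q34 : Integrable (fun x => 2 * (v x * z n x) + 2 * (u'' x * w'' n x)) :=
          q3.add q4
        have q234 : Integrable (fun x => z n x ^ 2 + w'' n x ^ 2
            + (2 * (v x * z n x) + 2 * (u'' x * w'' n x))) := q2.add q34
        rw [he1, integral_add q1 q234, integral_add q2 q34,
          integral_add q3 q4, integral_const_mul, integral_const_mul]
      have hWe : (fun x => W (u x + w n x)) = fun x => W (u x) + (W (w n x)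
          + (u x * w n x + (N (u x + w n x) - N (u x) - N (w n x)))) := by
        funext x; rw [hNdef]; ring
      have hWq : (∫ x, W (u x + w n x))
          = (∫ x, W (u x)) + ((∫ x, W (w n x))
              + ((∫ x, u x * w n x) + ∫ x, (N (u x + w n x) - N (u x) - N (w n x)))) := by
        have p1 : Integrable (fun x => u x * w n x
            + (N (u x + w n x) - N (u x) - N (w n x))) := (mulL2 huL2 (hwL2 n)).add (hDint n)
        have p2 : Integrable (fun x => W (w n x) + (u x * w n x
            + (N (u x + w n x) - N (u x) - N (w n x)))) := (hintw n).add p1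
        rw [hWe, integral_add hintu p2, integral_add (hintw n) p1,
          integral_add (mulL2 huL2 (hwL2 n)) (hDint n)]
      rw [hq, hWq]
      ring
    rw [show (0:ℝ) = 0 + 0 + 0 + 0 by norm_num]
    exact Tendsto.congr (fun n => (hiden n).symm) (((tvz.add tu''w'').add tuw).add hDtend)
  · -- momentum
    have hidm : ∀ n,
        momentum (fun x => u' x + w' n x) (fun x => v x + z n x)
          - momentum u' v - momentum (w' n) (z n)
        = -((∫ x, v x * w' n x) + ∫ x, z n x * u' x) := by
      intro n
      unfold momentum
      have i1 : Integrable (fun x => v x * u' x) := mulL2 hvL2 hu'L2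
      have i2 : Integrable (fun x => v x * w' n x) := mulL2 hvL2 (hw'L2 n)
      have i3 : Integrable (fun x => z n x * u' x) := mulL2 (hzL2 n) hu'L2
      have i4 : Integrable (fun x => z n x * w' n x) := mulL2 (hzL2 n) (hw'L2 n)
      have he : (fun x => (v x + z n x) * (u' x + w' n x))
          = fun x => v x * u' x + (v x * w' n x + (z n x * u' x + z n x * w' n x)) := by
        funext x; ring
      have i34 : Integrable (fun x => z n x * u' x + z n x * w' n x) := i3.add i4
      have i234 : Integrable (fun x => v x * w' n x + (z n x * u' x + z n x * w' n x)) :=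
        i2.add i34
      rw [he, integral_add i1 i234, integral_add i2 i34, integral_add i3 i4]
      ring
    rw [show (0:ℝ) = -((0:ℝ) + 0) by norm_num]
    exact Tendsto.congr (fun n => (hidm n).symm) ((tvw'.add tzu').neg)
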